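/- Let E be a locally cartesian closed category with a strict initial object. For any morphism p : E → B, the canonical factorization map p̄ : E → dom(¬¬p) is dense, i.e. ¬¬(p̄) is an isomorphism (equivalently, ¬(p̄) has initial domain). -/
import Mathlib


open CategoryTheory CategoryTheory.Limits

universe v u

/-- A locally cartesian closed category: each pullback functor `Over.pullback p`
has a right adjoint `Π_p`. -/
class LCC (C : Type u) [Category.{v} C] [HasPullbacks C] where
  Pi : ∀ {X Y : C} (p : X ⟶ Y), Over X ⥤ Over Y
  adj : ∀ {X Y : C} (p : X ⟶ Y), Over.pullback p ⊣ Pi p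

variable {C : Type u} [Category.{v} C] [HasPullbacks C] [LCC C] [HasInitial C]

/-- The negation `¬p : B∖im p ⟶ B` of `p : E ⟶ B`, i.e. `Π_p (0 ⟶ E)`,
the right edge of the distributivity pullback around `0 ⟶ E` and `p`. -/
noncomputable def neg {E B : C} (p : E ⟶ B) : Over B :=
  (LCC.Pi p).obj (Over.mk (initial.to E))

/-- The double negation `¬¬p` of `p : E ⟶ B`. -/
noncomputable def nneg {E B : C} (p : E ⟶ B) : Over B := neg (neg p).hom

section Aux

variable [HasStrictInitialObjects C]

/-- If an object of `Over X` admits a morphism to `Over.mk (initial.to X)`,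
its total space is initial. -/
noncomputable def isInitial_of_hom_to_initial {X : C} {G : Over X}
    (u : G ⟶ Over.mk (initial.to X)) : IsInitial G.left :=
  haveI : IsIso u.left := initialIsInitial.isIso_to u.left
  IsInitial.ofIso initialIsInitial (asIso u.left).symm

/-- Any two parallel morphisms into `Over.mk (initial.to X)` agree. -/
lemma hom_to_initial_ext {X : C} {G : Over X}
    (u v : G ⟶ Over.mk (initial.to X)) : u = v := by
  have h := isInitial_of_hom_to_initial u
  ext
  exact h.hom_ext _ _

/-- The negation of any morphism is a monomorphism. -/
lemma neg_hom_mono {E B : C} (p : E ⟶ B) : Mono (neg p).hom := by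
  constructor
  intro Z a b hab
  let za : Over.mk (a ≫ (neg p).hom) ⟶ neg p := Over.homMk a
  let zb : Over.mk (a ≫ (neg p).hom) ⟶ neg p := Over.homMk b hab.symm
  have : za = zb := by
    have := hom_to_initial_ext
      (((LCC.adj p).homEquiv (Over.mk (a ≫ (neg p).hom)) (Over.mk (initial.to E))).symm za)
      (((LCC.adj p).homEquiv (Over.mk (a ≫ (neg p).hom)) (Over.mk (initial.to E))).symm zb)
    exact ((LCC.adj p).homEquiv _ _).symm.injective this
  simpa [za, zb] using congrArg CommaMorphism.left this

end Aux

/-- In a locally cartesian closed category with a strict initial object, the canonical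
factorization map `p̄ : E ⟶ dom(¬¬p)` (any map with `p̄ ≫ ¬¬p = p`) is dense:
its negation has initial domain. -/
theorem factorization_map_is_dense
    [HasStrictInitialObjects C] {E B : C} (p : E ⟶ B)
    (pbar : E ⟶ (nneg p).left) (hfac : pbar ≫ (nneg p).hom = p) :
    Nonempty (IsInitial ((neg pbar).left)) := by
  set h : (nneg p).left ⟶ B := (nneg p).hom with hh
  haveI hmono : Mono h := neg_hom_mono (neg p).hom
  set N : C := (neg pbar).left with hN
  set q : N ⟶ (nneg p).left := (neg pbar).hom with hq
  set m : N ⟶ B := q ≫ h with hm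
  -- Step A: the pullback of `pbar` along `q` is initial (counit of `adj pbar`).
  have hA : IsInitial (pullback q pbar) :=
    isInitial_of_hom_to_initial ((LCC.adj pbar).counit.app (Over.mk (initial.to E)))
  -- Step B: the pullback of `p` along `m` is initial, since `h` is mono.
  have hB : IsInitial (pullback m p) := by
    have hcomm : (pullback.fst m p) ≫ q = (pullback.snd m p) ≫ pbar := by
      rw [← cancel_mono h]
      simp only [Category.assoc, ← hm]
      rw [hfac, pullback.condition]
    have k : pullback m p ⟶ pullback q pbar :=
      pullback.lift (pullback.fst m p) (pullback.snd m p) hcomm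
    have : IsIso (k ≫ hA.to (⊥_ C)) := initialIsInitial.isIso_to _
    exact IsInitial.ofIso initialIsInitial (asIso (k ≫ hA.to (⊥_ C))).symm
  -- Step C: hence `m` factors through `neg p`.
  have cmor : (Over.pullback p).obj (Over.mk m) ⟶ Over.mk (initial.to E) :=
    Over.homMk (hB.to (⊥_ C)) (hB.hom_ext _ _)
  have r : Over.mk m ⟶ neg p :=
    (LCC.adj p).homEquiv (Over.mk m) (Over.mk (initial.to E)) cmor
  have hr : r.left ≫ (neg p).hom = m := Over.w r
  -- Step D: the pullback of `neg p` along `nneg p` is initial (counit of `adj (neg p).hom`).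
  have hD : IsInitial (pullback h (neg p).hom) :=
    isInitial_of_hom_to_initial
      ((LCC.adj (neg p).hom).counit.app (Over.mk (initial.to (neg p).left)))
  -- Final: `N` maps into that initial pullback.
  have kN : N ⟶ pullback h (neg p).hom := pullback.lift q r.left (by rw [hr, hm])
  have : IsIso (kN ≫ hD.to (⊥_ C)) := initialIsInitial.isIso_to _
  exact ⟨IsInitial.ofIso initialIsInitial (asIso (kN ≫ hD.to (⊥_ C))).symm⟩
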